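/- Let a_{l,m} = (2l+4m)! / ((l+m)!·l!·(m!)³) and suppose complex numbers λ, μ satisfy 256·(|λ|+|μ|) < 1. Then for every natural number N, the tail series Σ_{l+m ≥ N+1} a_{l,m}·λ^l·μ^m converges absolutely and |Σ_{l+m≥N+1} a_{l,m}·λ^l·μ^m| ≤ ((4(N+1))!/((N+1)!)^4)·(|λ|+|μ|)^(N+1) / (1 − 256·(|λ|+|μ|)). -/

import Mathlib

noncomputable def aCoeff (l m : ℕ) : ℝ :=
  ((2 * l + 4 * m).factorial : ℝ) /
    (((l + m).factorial : ℝ) * (l.factorial : ℝ) * ((m.factorial : ℝ)) ^ 3)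

noncomputable def cCoeff (n : ℕ) : ℝ := ((4 * n).factorial : ℝ) / ((n.factorial : ℝ)) ^ 4

lemma aCoeff_nonneg (l m : ℕ) : 0 ≤ aCoeff l m := by unfold aCoeff; positivity
lemma cCoeff_nonneg (n : ℕ) : 0 ≤ cCoeff n := by unfold cCoeff; positivity

lemma key_nat : ∀ (l m : ℕ),
    (2 * l + 4 * m).factorial * ((l + m).factorial) ^ 2 ≤
      (4 * (l + m)).factorial * (m.factorial) ^ 2 := by
  intro l
  induction l with
  | zero => intro m; simp [pow_succ]
  | succ l ih =>
    intro m
    have h1 : 2 * (l + 1) + 4 * m = (2 * l + 4 * m) + 2 := by ring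
    have h2 : 4 * (l + 1 + m) = (4 * (l + m)) + 4 := by ring
    have h3 : l + 1 + m = (l + m) + 1 := by ring
    rw [h1, h2, h3]
    set n := l + m with hn
    set A := (2 * l + 4 * m) with hA
    have e1 : (A + 2).factorial = (A + 2) * ((A + 1) * A.factorial) := by
      rw [Nat.factorial_succ, Nat.factorial_succ]
    have e2 : (4 * n + 4).factorial =
        (4*n+4) * ((4*n+3) * ((4*n+2) * ((4*n+1) * (4*n).factorial))) := by
      rw [show 4*n+4 = (4*n+3)+1 by ring, Nat.factorial_succ,
        show 4*n+3 = (4*n+2)+1 by ring, Nat.factorial_succ,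
        show 4*n+2 = (4*n+1)+1 by ring, Nat.factorial_succ,
        show 4*n+1 = (4*n)+1 by ring, Nat.factorial_succ]
    rw [e1, e2, Nat.factorial_succ]
    have key : (A + 2) * (A + 1) * ((n+1) * (n+1)) ≤ (4*n+4) * (4*n+3) * ((4*n+2) * (4*n+1)) := by
      have hAle : A ≤ 4 * n := by omega
      gcongr <;> omega
    calc (A + 2) * ((A + 1) * A.factorial) * ((n + 1) * n.factorial) ^ 2
        = ((A+2)*(A+1)*((n+1)*(n+1))) * (A.factorial * (n.factorial)^2) := by ring
      _ ≤ ((4*n+4) * (4*n+3) * ((4*n+2) * (4*n+1))) * ((4*n).factorial * (m.factorial)^2) :=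
          Nat.mul_le_mul key (ih m)
      _ = (4*n+4) * ((4*n+3) * ((4*n+2) * ((4*n+1) * (4*n).factorial))) * (m.factorial)^2 := by ring

lemma key_nat2 (l m : ℕ) :
    (2 * l + 4 * m).factorial * ((l + m).factorial) ^ 4 ≤
      (4 * (l + m)).factorial * ((l + m).choose l) *
        ((l + m).factorial * l.factorial * (m.factorial) ^ 3) := by
  have hch : ((l+m).choose l) * l.factorial * m.factorial = (l+m).factorial := by
    simpa using Nat.choose_mul_factorial_mul_factorial (Nat.le_add_right l m)
  calc (2 * l + 4 * m).factorial * ((l + m).factorial) ^ 4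
      = ((2 * l + 4 * m).factorial * ((l + m).factorial) ^ 2) * ((l + m).factorial) ^ 2 := by ring
    _ ≤ ((4 * (l + m)).factorial * (m.factorial) ^ 2) * ((l + m).factorial) ^ 2 :=
        Nat.mul_le_mul_right _ (key_nat l m)
    _ = (4 * (l + m)).factorial * (m.factorial) ^ 2 * ((l + m).factorial *
          (((l+m).choose l) * l.factorial * m.factorial)) := by rw [hch]; ring
    _ = (4 * (l + m)).factorial * ((l + m).choose l) *
        ((l + m).factorial * l.factorial * (m.factorial) ^ 3) := by ring

lemma aCoeff_le (l m : ℕ) : aCoeff l m ≤ cCoeff (l + m) * ((l + m).choose l : ℝ) := by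
  rw [aCoeff, cCoeff, div_mul_eq_mul_div, div_le_div_iff₀ (by positivity) (by positivity)]
  calc ((2 * l + 4 * m).factorial : ℝ) * ((l + m).factorial : ℝ) ^ 4
      ≤ ((4 * (l + m)).factorial : ℝ) * (((l + m).choose l : ℕ) : ℝ) *
        (((l + m).factorial : ℝ) * (l.factorial : ℝ) * ((m.factorial : ℝ)) ^ 3) := by
        exact_mod_cast key_nat2 l m
    _ = _ := by ring

lemma sum_antidiagonal_le (n : ℕ) {x y : ℝ} (hx : 0 ≤ x) (hy : 0 ≤ y) :
    ∑ p ∈ Finset.HasAntidiagonal.antidiagonal n, aCoeff p.1 p.2 * x ^ p.1 * y ^ p.2 ≤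
      cCoeff n * (x + y) ^ n := by
  rw [Finset.Nat.sum_antidiagonal_eq_sum_range_succ_mk, add_pow, Finset.mul_sum]
  apply Finset.sum_le_sum
  intro k hk
  have hkn : k ≤ n := Nat.lt_succ_iff.mp (Finset.mem_range.mp hk)
  have hadd : k + (n - k) = n := by omega
  have hb := aCoeff_le k (n - k)
  rw [hadd] at hb
  calc aCoeff k (n-k) * x ^ k * y ^ (n-k)
      ≤ (cCoeff n * (n.choose k : ℝ)) * x ^ k * y ^ (n-k) := by
        have hx' : (0:ℝ) ≤ x ^ k := by positivity
        have hy' : (0:ℝ) ≤ y ^ (n-k) := by positivity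
        exact mul_le_mul_of_nonneg_right (mul_le_mul_of_nonneg_right hb hx') hy'
    _ = cCoeff n * (x ^ k * y ^ (n-k) * (n.choose k : ℝ)) := by ring

lemma ratio_nat (n : ℕ) : (4 * (n+1)).factorial * (n.factorial)^4 ≤
    256 * ((4 * n).factorial * ((n+1).factorial)^4) := by
  have e2 : (4 * (n+1)).factorial =
      (4*n+4) * ((4*n+3) * ((4*n+2) * ((4*n+1) * (4*n).factorial))) := by
    rw [show 4*(n+1) = (4*n+3)+1 by ring, Nat.factorial_succ,
      show 4*n+3 = (4*n+2)+1 by ring, Nat.factorial_succ,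
      show 4*n+2 = (4*n+1)+1 by ring, Nat.factorial_succ,
      show 4*n+1 = (4*n)+1 by ring, Nat.factorial_succ]
  rw [e2, Nat.factorial_succ]
  have key : (4*n+4) * ((4*n+3) * ((4*n+2) * (4*n+1))) ≤
      (4*n+4) * ((4*n+4) * ((4*n+4) * (4*n+4))) := by gcongr <;> omega
  calc (4*n+4) * ((4*n+3) * ((4*n+2) * ((4*n+1) * (4*n).factorial))) * (n.factorial)^4
      = ((4*n+4) * ((4*n+3) * ((4*n+2) * (4*n+1)))) * ((4*n).factorial * (n.factorial)^4) := by
        ring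
    _ ≤ ((4*n+4) * ((4*n+4) * ((4*n+4) * (4*n+4)))) * ((4*n).factorial * (n.factorial)^4) :=
        Nat.mul_le_mul_right _ key
    _ = 256 * ((4*n).factorial * ((n+1) * n.factorial)^4) := by ring

lemma cCoeff_succ_le (n : ℕ) : cCoeff (n+1) ≤ 256 * cCoeff n := by
  rw [cCoeff, cCoeff, ← mul_div_assoc]
  rw [div_le_div_iff₀ (by positivity) (by positivity)]
  calc ((4 * (n+1)).factorial : ℝ) * ((n.factorial : ℝ))^4
      = (((4 * (n+1)).factorial * (n.factorial)^4 : ℕ) : ℝ) := by push_cast; ring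
    _ ≤ ((256 * ((4 * n).factorial * ((n+1).factorial)^4) : ℕ) : ℝ) := by
        exact_mod_cast ratio_nat n
    _ = 256 * ((4 * n).factorial : ℝ) * (((n+1).factorial : ℝ))^4 := by push_cast; ring

lemma cCoeff_mul_pow_le {r : ℝ} (hr : 0 ≤ r) (a k : ℕ) :
    cCoeff (a + k) * r^(a+k) ≤ cCoeff a * r^a * (256*r)^k := by
  induction k with
  | zero => simp
  | succ k ih =>
    calc cCoeff (a+(k+1)) * r^(a+(k+1))
        = cCoeff ((a+k)+1) * r^(a+k) * r := by
          rw [show a+(k+1) = (a+k)+1 from rfl, pow_succ]; ring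
      _ ≤ (256 * cCoeff (a+k)) * r^(a+k) * r := by
          have := cCoeff_succ_le (a+k)
          gcongr
      _ = (256*r) * (cCoeff (a+k) * r^(a+k)) := by ring
      _ ≤ (256*r) * (cCoeff a * r^a * (256*r)^k) := by
          have h0 : (0:ℝ) ≤ 256 * r := by positivity
          exact mul_le_mul_of_nonneg_left ih h0
      _ = cCoeff a * r^a * (256*r)^(k+1) := by ring

theorem tail_bound_delta1 (N : ℕ) (lam mu : ℂ)
    (h : 256 * (‖lam‖ + ‖mu‖) < 1) :
    Summable (fun p : ℕ × ℕ =>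
      if N + 1 ≤ p.1 + p.2 then (aCoeff p.1 p.2 : ℂ) * lam ^ p.1 * mu ^ p.2 else 0) ∧
    Summable (fun p : ℕ × ℕ =>
      ‖(if N + 1 ≤ p.1 + p.2 then (aCoeff p.1 p.2 : ℂ) * lam ^ p.1 * mu ^ p.2 else 0)‖) ∧
    ‖(∑' p : ℕ × ℕ,
        if N + 1 ≤ p.1 + p.2 then (aCoeff p.1 p.2 : ℂ) * lam ^ p.1 * mu ^ p.2 else 0)‖ ≤
      ((4 * (N + 1)).factorial : ℝ) / ((N + 1).factorial : ℝ) ^ 4 *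
        (‖lam‖ + ‖mu‖) ^ (N + 1) /
        (1 - 256 * (‖lam‖ + ‖mu‖)) := by
  set r : ℝ := ‖lam‖ + ‖mu‖ with hrdef
  have hr0 : 0 ≤ r := by positivity
  have hq0 : (0:ℝ) ≤ 256 * r := by positivity
  have hq1 : 256 * r < 1 := h
  have hden : 0 < 1 - 256 * r := by linarith
  set C : ℝ := cCoeff (N+1) * r ^ (N+1) with hCdef
  have hC0 : 0 ≤ C := by
    have := cCoeff_nonneg (N+1)
    positivity
  set f : ℕ × ℕ → ℂ := fun p =>
    if N + 1 ≤ p.1 + p.2 then (aCoeff p.1 p.2 : ℂ) * lam ^ p.1 * mu ^ p.2 else 0 with hfdef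
  set g : ℕ × ℕ → ℝ := fun p =>
    if N + 1 ≤ p.1 + p.2 then
      aCoeff p.1 p.2 * (‖lam‖) ^ p.1 * (‖mu‖) ^ p.2 else 0 with hgdef
  have hg0 : ∀ p, 0 ≤ g p := by
    intro p
    simp only [hgdef]
    split
    · have := aCoeff_nonneg p.1 p.2
      positivity
    · exact le_refl _
  have habs : ∀ p, ‖f p‖ = g p := by
    intro p
    simp only [hfdef, hgdef]
    split
    · simp [map_mul, map_pow, Complex.norm_real, abs_of_nonneg (aCoeff_nonneg p.1 p.2)]
    · simp
  -- the geometric majorant on ℕ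
  set ifterm : ℕ → ℝ := fun n => if N + 1 ≤ n then C * (256*r)^(n-(N+1)) else 0 with hifdef
  have hift0 : ∀ n, 0 ≤ ifterm n := by
    intro n
    simp only [hifdef]
    split
    · positivity
    · exact le_refl _
  have hshift : (fun k => ifterm (k + (N+1))) = fun k => C * (256*r)^k := by
    funext k
    simp only [hifdef]
    rw [if_pos (Nat.le_add_left _ _), Nat.add_sub_cancel]
  have hiftsum : Summable ifterm := by
    rw [← summable_nat_add_iff (N+1)]
    rw [hshift]
    exact (summable_geometric_of_lt_one hq0 hq1).mul_left C
  have htsum_ifterm : ∑' n, ifterm n = C * (1 - 256*r)⁻¹ := by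
    have hsplit := Summable.sum_add_tsum_nat_add (f := ifterm) (N+1) hiftsum
    have hzero : ∑ i ∈ Finset.range (N+1), ifterm i = 0 := by
      apply Finset.sum_eq_zero
      intro i hi
      have : ¬ (N + 1 ≤ i) := by
        have := Finset.mem_range.mp hi; omega
      simp only [hifdef, if_neg this]
    rw [hzero, zero_add] at hsplit
    rw [← hsplit]
    have : (fun i => ifterm (i + (N+1))) = fun i => C * (256*r)^i := hshift
    rw [show ∑' (i : ℕ), ifterm (i + (N + 1)) = ∑' (i : ℕ), C * (256*r)^i from by rw [tsum_congr (fun i => congrFun hshift i)]]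
    rw [tsum_mul_left, tsum_geometric_of_lt_one hq0 hq1]
  -- bound on finite sums of g
  have hfin : ∀ u : Finset (ℕ × ℕ), ∑ p ∈ u, g p ≤ C * (1 - 256*r)⁻¹ := by
    intro u
    set M := u.sup (fun p => p.1 + p.2) with hM
    have hsub : u ⊆ (Finset.range (M+1)).biUnion (fun n => Finset.HasAntidiagonal.antidiagonal n) := by
      intro p hp
      refine Finset.mem_biUnion.mpr ⟨p.1 + p.2,
        Finset.mem_range.mpr (Nat.lt_succ_of_le (Finset.le_sup (f := fun p => p.1 + p.2) hp)), ?_⟩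
      simp [Finset.HasAntidiagonal.mem_antidiagonal]
    have hdisj : (↑(Finset.range (M+1)) : Set ℕ).PairwiseDisjoint
        (fun n => (Finset.HasAntidiagonal.antidiagonal n : Finset (ℕ × ℕ))) := by
      intro a _ b _ hab
      refine Finset.disjoint_left.mpr ?_
      intro p hpa hpb
      exact hab ((Finset.HasAntidiagonal.mem_antidiagonal.mp hpa).symm.trans
        (Finset.HasAntidiagonal.mem_antidiagonal.mp hpb))
    have hterm : ∀ n ∈ Finset.range (M+1),
        ∑ p ∈ Finset.HasAntidiagonal.antidiagonal n, g p ≤ ifterm n := by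
      intro n _
      by_cases hnN : N + 1 ≤ n
      · have hcong : ∀ p ∈ Finset.HasAntidiagonal.antidiagonal n, g p =
            aCoeff p.1 p.2 * (‖lam‖) ^ p.1 * (‖mu‖) ^ p.2 := by
          intro p hp
          have hpn : p.1 + p.2 = n := Finset.HasAntidiagonal.mem_antidiagonal.mp hp
          simp only [hgdef, hpn, if_pos hnN]
        rw [Finset.sum_congr rfl hcong]
        have h1 : ∑ p ∈ Finset.HasAntidiagonal.antidiagonal n,
            aCoeff p.1 p.2 * (‖lam‖) ^ p.1 * (‖mu‖) ^ p.2 ≤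
            cCoeff n * r ^ n :=
          sum_antidiagonal_le n (norm_nonneg lam) (norm_nonneg mu)
        obtain ⟨k, rfl⟩ : ∃ k, n = (N+1) + k := ⟨n - (N+1), by omega⟩
        have h2 := cCoeff_mul_pow_le hr0 (N+1) k
        have h3 : ifterm ((N+1)+k) = C * (256*r)^k := by
          simp only [hifdef]
          rw [if_pos (Nat.le_add_right _ _), Nat.add_sub_cancel_left]
        rw [h3]
        calc ∑ p ∈ Finset.HasAntidiagonal.antidiagonal ((N+1)+k),
              aCoeff p.1 p.2 * (‖lam‖) ^ p.1 * (‖mu‖) ^ p.2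
            ≤ cCoeff ((N+1)+k) * r ^ ((N+1)+k) := h1
          _ ≤ cCoeff (N+1) * r ^ (N+1) * (256*r)^k := h2
          _ = C * (256*r)^k := by rw [hCdef]
      · have hcong : ∀ p ∈ Finset.HasAntidiagonal.antidiagonal n, g p = 0 := by
          intro p hp
          have hpn : p.1 + p.2 = n := Finset.HasAntidiagonal.mem_antidiagonal.mp hp
          simp only [hgdef, hpn, if_neg hnN]
        rw [Finset.sum_congr rfl hcong]
        simp only [hifdef, if_neg hnN, Finset.sum_const_zero, le_refl]
    calc ∑ p ∈ u, g p
        ≤ ∑ p ∈ (Finset.range (M+1)).biUnion (fun n => Finset.HasAntidiagonal.antidiagonal n), g p :=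
          Finset.sum_le_sum_of_subset_of_nonneg hsub (fun p _ _ => hg0 p)
      _ = ∑ n ∈ Finset.range (M+1), ∑ p ∈ Finset.HasAntidiagonal.antidiagonal n, g p :=
          Finset.sum_biUnion hdisj
      _ ≤ ∑ n ∈ Finset.range (M+1), ifterm n := Finset.sum_le_sum hterm
      _ ≤ ∑' n, ifterm n := Summable.sum_le_tsum _ (fun i _ => hift0 i) hiftsum
      _ = C * (1 - 256*r)⁻¹ := htsum_ifterm
  have hgsum : Summable g := summable_of_sum_le (fun p => hg0 p) hfin
  have hsf_abs : Summable (fun p => ‖f p‖) :=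
    hgsum.congr (fun p => (habs p).symm)
  have hsf : Summable f :=
    Summable.of_norm hsf_abs
  refine ⟨hsf, hsf_abs, ?_⟩
  have htg : ∑' p, g p ≤ C * (1 - 256*r)⁻¹ :=
    le_of_tendsto hgsum.hasSum (Filter.Eventually.of_forall hfin)
  calc ‖∑' p, f p‖ = ‖∑' p, f p‖ := rfl
    _ ≤ ∑' p, ‖f p‖ := norm_tsum_le_tsum_norm hsf_abs
    _ = ∑' p, g p := tsum_congr (fun p => by rw [habs p])
    _ ≤ C * (1 - 256*r)⁻¹ := htg
    _ = ((4 * (N + 1)).factorial : ℝ) / ((N + 1).factorial : ℝ) ^ 4 *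
        r ^ (N + 1) / (1 - 256 * r) := by
        rw [hCdef, cCoeff, div_eq_mul_inv, div_eq_mul_inv]
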